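/- The family {A_χ} indexed by the characters of G, where A_χ := ∑ g, conj (χ g) • Q g, satisfies the Knill–Laflamme conditions with respect to Π: for all characters χ, χ' : G →* ℂˣ, Π * (A_χ)ᴴ * A_{χ'} * Π = (if χ = χ' then (1 : ℂ) else 0) • Π. Hence {A_χ} is a correctable error set. -/

import Mathlib

open scoped Kronecker
open Matrix

private lemma kron_conjT {l m n p : Type*} [Fintype l] [Fintype n]
    (A : Matrix l m ℂ) (B : Matrix n p ℂ) : (A ⊗ₖ B)ᴴ = Aᴴ ⊗ₖ Bᴴ := by
  ext ⟨i, j⟩ ⟨k, l⟩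
  simp [conjTranspose_apply, mul_comm]

private lemma mul_vecMulVec' {m n p : Type*} [Fintype n] (M : Matrix m n ℂ) (x : n → ℂ)
    (y : p → ℂ) : M * vecMulVec x y = vecMulVec (M *ᵥ x) y := by
  ext i j
  simp [mul_apply, vecMulVec_apply, mulVec, dotProduct, Finset.sum_mul, mul_assoc]

private lemma vecMulVec_mul' {m n p : Type*} [Fintype n] (x : m → ℂ) (y : n → ℂ)
    (M : Matrix n p ℂ) : vecMulVec x y * M = vecMulVec x (y ᵥ* M) := by
  ext i j
  simp [mul_apply, vecMulVec_apply, vecMul, dotProduct, Finset.mul_sum, mul_assoc]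

private lemma vecMulVec_mul_vecMulVec' {m n p : Type*} [Fintype n] (a : m → ℂ) (b c : n → ℂ)
    (d : p → ℂ) : vecMulVec a b * vecMulVec c d = (∑ k, b k * c k) • vecMulVec a d := by
  ext i j
  simp only [mul_apply, vecMulVec_apply, Matrix.smul_apply, Finset.sum_mul, smul_eq_mul]
  congr 1; ext k; ring

private lemma star_char {G : Type*} [CommGroup G] [Fintype G] (χ : G →* ℂˣ) (g : G) :
    star ((χ g : ℂ)) = (((χ g)⁻¹ : ℂˣ) : ℂ) := by
  have hpow : ((χ g : ℂ)) ^ Fintype.card G = 1 := by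
    rw [← Units.val_pow_eq_pow_val, ← map_pow χ, pow_card_eq_one, _root_.map_one, Units.val_one]
  have hnorm : ‖(χ g : ℂ)‖ = 1 :=
    Complex.norm_eq_one_of_pow_eq_one hpow Fintype.card_ne_zero
  rw [Units.val_inv_eq_inv_val, RCLike.inv_eq_conj hnorm]
  rfl

theorem A_chi_family_correctable
    {G : Type*} [CommGroup G] [Fintype G] [DecidableEq G]
    [DecidableEq (G →* ℂˣ)] {r s : ℕ}
    (U_R : G → Matrix (Fin r) (Fin r) ℂ)
    (U_S : G → Matrix (Fin s) (Fin s) ℂ)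
    (hR_mul : ∀ g h : G, U_R (g * h) = U_R g * U_R h)
    (hR_one : U_R 1 = 1)
    (hR_unitary : ∀ g : G, (U_R g)ᴴ * U_R g = 1)
    (hS_mul : ∀ g h : G, U_S (g * h) = U_S g * U_S h)
    (hS_one : U_S 1 = 1)
    (hS_unitary : ∀ g : G, (U_S g)ᴴ * U_S g = 1)
    (φ : G → (Fin r → ℂ))
    (hcov : ∀ g h : G, (U_R h).mulVec (φ g) = φ (h * g))
    (horth : ∀ g h : G,
      (∑ i : Fin r, star (φ g i) * φ h i) = if g = h then 1 else 0)
    (hcomplete : ∑ g : G, Matrix.vecMulVec (φ g) (star (φ g))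
        = (1 : Matrix (Fin r) (Fin r) ℂ))
    (Pg : Matrix (Fin r × Fin s) (Fin r × Fin s) ℂ)
    (hPg : Pg = (Fintype.card G : ℂ)⁻¹ • ∑ g : G, (U_R g) ⊗ₖ (U_S g))
    (Q : G → Matrix (Fin r × Fin s) (Fin r × Fin s) ℂ)
    (hQ : ∀ g : G, Q g = (Matrix.vecMulVec (φ g) (star (φ g))) ⊗ₖ
        (1 : Matrix (Fin s) (Fin s) ℂ))
    (A : (G →* ℂˣ) → Matrix (Fin r × Fin s) (Fin r × Fin s) ℂ)
    (hA : ∀ χ : G →* ℂˣ, A χ = ∑ g : G, star ((χ g : ℂ)) • Q g) :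
    ∀ χ χ' : G →* ℂˣ,
      Pg * (A χ)ᴴ * A χ' * Pg = (if χ = χ' then (1 : ℂ) else 0) • Pg := by
  classical
  intro χ χ'
  set n : ℂ := (Fintype.card G : ℂ) with hn
  have hn0 : n ≠ 0 := Nat.cast_ne_zero.mpr Fintype.card_ne_zero
  set W : G → Matrix (Fin r × Fin s) (Fin r × Fin s) ℂ :=
    fun g => (U_R g) ⊗ₖ (U_S g) with hW
  have hW_mul : ∀ g h : G, W (g * h) = W g * W h := fun g h => by
    simp only [hW, hR_mul, hS_mul, Matrix.mul_kronecker_mul]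
  have hW_left : ∀ g : G, (W g)ᴴ * W g = 1 := fun g => by
    rw [hW, kron_conjT, ← Matrix.mul_kronecker_mul, hR_unitary, hS_unitary,
      Matrix.one_kronecker_one]
  have hW_right : ∀ g : G, W g * (W g)ᴴ = 1 := fun g =>
    mul_eq_one_comm.mp (hW_left g)
  have hPg' : Pg = n⁻¹ • ∑ g : G, W g := hPg
  -- invariance of Pg
  have hWsum : ∀ h : G, ∑ g : G, W (g * h) = ∑ g : G, W g := fun h =>
    Fintype.sum_equiv (Equiv.mulRight h) _ _ (fun g => rfl)
  have hPW : ∀ h : G, Pg * W h = Pg := by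
    intro h
    rw [hPg', smul_mul_assoc, Finset.sum_mul]
    congr 1
    calc (∑ g : G, W g * W h) = ∑ g : G, W (g * h) := by
          refine Finset.sum_congr rfl fun g _ => (hW_mul g h).symm
      _ = ∑ g : G, W g := hWsum h
  have hWP : ∀ h : G, W h * Pg = Pg := by
    intro h
    rw [hPg', mul_smul_comm, Finset.mul_sum]
    congr 1
    calc (∑ g : G, W h * W g) = ∑ g : G, W (g * h) := by
          refine Finset.sum_congr rfl fun g _ => by rw [mul_comm g h, hW_mul]
      _ = ∑ g : G, W g := hWsum h
  have hWHP : ∀ h : G, (W h)ᴴ * Pg = Pg := by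
    intro h
    conv_lhs => rw [← hWP h, ← mul_assoc, hW_left, one_mul]
  have hPP : Pg * Pg = Pg := by
    nth_rewrite 2 [hPg']
    rw [mul_smul_comm, Finset.mul_sum]
    have : (∑ g : G, Pg * W g) = (Fintype.card G : ℕ) • Pg := by
      rw [Finset.sum_congr rfl fun g _ => hPW g, Finset.sum_const, Finset.card_univ]
    rw [this, ← Nat.cast_smul_eq_nsmul ℂ, smul_smul, ← hn, inv_mul_cancel₀ hn0, one_smul]
  -- Q facts
  have hQsum : ∑ g : G, Q g = 1 := by
    have h1 : ((∑ g : G, Matrix.vecMulVec (φ g) (star (φ g))) ⊗ₖ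
        (1 : Matrix (Fin s) (Fin s) ℂ)) = ∑ g : G, Q g := by
      ext ⟨i, j⟩ ⟨k, l⟩
      simp [hQ, Matrix.sum_apply, Finset.sum_mul]
    rw [← h1, hcomplete, Matrix.one_kronecker_one]
  have hWQW : ∀ h g : G, W h * Q g * (W h)ᴴ = Q (h * g) := by
    intro h g
    have hWh : W h = (U_R h) ⊗ₖ (U_S h) := rfl
    rw [hQ, hQ, hWh, kron_conjT, ← Matrix.mul_kronecker_mul, ← Matrix.mul_kronecker_mul,
      mul_vecMulVec', vecMulVec_mul', hcov, ← Matrix.star_mulVec, hcov,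
      Matrix.mul_one, mul_eq_one_comm.mp (hS_unitary h)]
  have hPQP_const : ∀ g : G, Pg * Q g * Pg = Pg * Q 1 * Pg := by
    intro g
    calc Pg * Q g * Pg = Pg * (W g * Q 1 * (W g)ᴴ) * Pg := by
          rw [hWQW g 1, mul_one]
      _ = (Pg * W g) * (Q 1 * ((W g)ᴴ * Pg)) := by
          simp only [Matrix.mul_assoc]
      _ = Pg * Q 1 * Pg := by rw [hPW, hWHP, Matrix.mul_assoc]
  have hPQP : ∀ g : G, Pg * Q g * Pg = n⁻¹ • Pg := by
    have hsum : ∑ g : G, Pg * Q g * Pg = Pg := by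
      calc ∑ g : G, Pg * Q g * Pg = Pg * (∑ g : G, Q g) * Pg := by
            rw [Finset.mul_sum, Finset.sum_mul]
        _ = Pg := by rw [hQsum, Matrix.mul_one, hPP]
    have hsum' : n • (Pg * Q 1 * Pg) = Pg := by
      calc n • (Pg * Q 1 * Pg) = ∑ g : G, Pg * Q g * Pg := by
            rw [Finset.sum_congr rfl fun g _ => hPQP_const g, Finset.sum_const,
              Finset.card_univ, ← Nat.cast_smul_eq_nsmul ℂ, ← hn]
        _ = Pg := hsum
    intro g
    rw [hPQP_const g]
    calc Pg * Q 1 * Pg = n⁻¹ • (n • (Pg * Q 1 * Pg)) := by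
          rw [smul_smul, inv_mul_cancel₀ hn0, one_smul]
      _ = n⁻¹ • Pg := by rw [hsum']
  -- Q orthogonality and hermiticity
  have hQH : ∀ g : G, (Q g)ᴴ = Q g := by
    intro g
    rw [hQ, kron_conjT, Matrix.conjTranspose_one]
    congr 1
    ext i j
    simp [vecMulVec_apply, conjTranspose_apply, mul_comm]
  have hQQ : ∀ g h : G, Q g * Q h = if g = h then Q g else 0 := by
    intro g h
    rw [hQ g, hQ h, ← Matrix.mul_kronecker_mul, Matrix.one_mul,
      vecMulVec_mul_vecMulVec']
    simp only [Pi.star_apply]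
    rw [horth]
    by_cases hgh : g = h
    · subst hgh
      rw [if_pos rfl, if_pos rfl, one_smul]
    · rw [if_neg hgh, if_neg hgh, zero_smul, Matrix.zero_kronecker]
  -- A computation
  have hAHA : (A χ)ᴴ * A χ' =
      ∑ g : G, ((χ g : ℂ) * star ((χ' g : ℂ))) • Q g := by
    rw [hA, hA, Matrix.conjTranspose_sum]
    simp only [Matrix.conjTranspose_smul, star_star, hQH]
    rw [Finset.sum_mul_sum]
    refine Finset.sum_congr rfl fun g _ => ?_
    rw [Finset.sum_eq_single g]
    · rw [smul_mul_assoc, mul_smul_comm, hQQ, if_pos rfl, smul_smul]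
    · intro h _ hne
      rw [smul_mul_assoc, mul_smul_comm, hQQ, if_neg (Ne.symm hne), smul_zero, smul_zero]
    · intro habs; exact absurd (Finset.mem_univ g) habs
  -- the character sum
  have hcs : ∑ g : G, (χ g : ℂ) * star ((χ' g : ℂ)) =
      if χ = χ' then n else 0 := by
    have hterm : ∀ g : G, (χ g : ℂ) * star ((χ' g : ℂ)) = (((χ * χ'⁻¹) g : ℂˣ) : ℂ) := by
      intro g
      rw [star_char]
      simp
    rw [Finset.sum_congr rfl fun g _ => hterm g]
    by_cases hx : χ = χ'
    · subst hx
      simp [hn, Finset.card_univ]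
    · rw [if_neg hx]
      have hne : (Units.coeHom ℂ).comp (χ * χ'⁻¹) ≠ 1 := by
        intro hone
        apply hx
        have : χ * χ'⁻¹ = 1 := by
          ext g
          have := congrArg (fun f => f g) hone
          simpa [Units.ext_iff] using this
        exact mul_inv_eq_one.mp this
      exact sum_hom_units_eq_zero ((Units.coeHom ℂ).comp (χ * χ'⁻¹)) hne
  -- put it together
  calc Pg * (A χ)ᴴ * A χ' * Pg
      = ∑ g : G, ((χ g : ℂ) * star ((χ' g : ℂ))) • (Pg * Q g * Pg) := by
        rw [Matrix.mul_assoc Pg ((A χ)ᴴ) (A χ'), hAHA, Finset.mul_sum, Finset.sum_mul]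
        refine Finset.sum_congr rfl fun g _ => ?_
        rw [mul_smul_comm, smul_mul_assoc, Matrix.mul_assoc]
    _ = (∑ g : G, (χ g : ℂ) * star ((χ' g : ℂ))) • (n⁻¹ • Pg) := by
        rw [Finset.sum_congr rfl fun g _ => by rw [hPQP g], ← Finset.sum_smul]
    _ = (if χ = χ' then (1 : ℂ) else 0) • Pg := by
        rw [hcs, smul_smul]
        by_cases hx : χ = χ'
        · rw [if_pos hx, if_pos hx, mul_inv_cancel₀ hn0]
        · rw [if_neg hx, if_neg hx, zero_mul]
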